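/- The image of the coding map Π : E^∞ → T of a Mauldin-Williams graph equals the invariant set K = ⋃_{v∈V} K_v, where (K_v) is the unique invariant list; in particular, for each vertex v, Π(E^∞(v)) = K_v. -/

import Mathlib

/-- The composition `φ_{α 0} ∘ ⋯ ∘ φ_{α k}` along a path `α`. -/
def pathMap {V E : Type*} (T : V → Type*) (r s : E → V)
    (φ : (e : E) → T (r e) → T (s e)) (α : ℕ → E)
    (h : ∀ i, r (α i) = s (α (i + 1))) : (k : ℕ) → T (r (α k)) → T (s (α 0))
  | 0 => φ (α 0)
  | (k + 1) => fun x =>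
      pathMap T r s φ α h k (cast (congrArg T (h k)).symm (φ (α (k + 1)) x))

private def itr {P : Sort*} (f : P → P) (p : P) : ℕ → P :=
  fun n => Nat.rec p (fun _ q => f q) n

private lemma castDist {V : Type*} {T : V → Type*} [∀ v, MetricSpace (T v)]
    {a b : V} (h : a = b) (h' : T a = T b) (x y : T a) :
    dist (cast h' x) (cast h' y) = dist x y := by subst h; rfl

private lemma castMem {V : Type*} {T : V → Type*} {K : ∀ v, Set (T v)}
    {a b : V} (h : a = b) (h' : T a = T b) {y : T a}
    (hy : y ∈ K a) : cast h' y ∈ K b := by subst h; exact hy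

universe u in
private lemma castShift {A B : Sort u} (h : A = B) (a : A) (b : B)
    (hab : cast h a = b) : a = cast h.symm b := by subst h; simpa using hab

private lemma pathMap_lip {V E : Type*} (T : V → Type*) [∀ v, MetricSpace (T v)]
    (r s : E → V) (φ : (e : E) → T (r e) → T (s e)) (c : ℝ) (hc : 0 ≤ c)
    (hφ : ∀ (e : E) (x y : T (r e)), dist (φ e x) (φ e y) ≤ c * dist x y)
    (α : ℕ → E) (hα : ∀ i, r (α i) = s (α (i + 1))) :
    ∀ k (x y : T (r (α k))),
      dist (pathMap T r s φ α hα k x) (pathMap T r s φ α hα k y)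
        ≤ c ^ (k + 1) * dist x y := by
  intro k
  induction k with
  | zero => intro x y; simpa [pathMap] using hφ (α 0) x y
  | succ k ih =>
    intro x y
    simp only [pathMap]
    have h1 := ih (cast (congrArg T (hα k)).symm (φ (α (k + 1)) x))
      (cast (congrArg T (hα k)).symm (φ (α (k + 1)) y))
    rw [castDist (hα k).symm] at h1
    have h2 := hφ (α (k + 1)) x y
    have hpow : (0:ℝ) ≤ c ^ (k + 1) := pow_nonneg hc _
    calc dist (pathMap T r s φ α hα k (cast (congrArg T (hα k)).symm (φ (α (k + 1)) x)))
          (pathMap T r s φ α hα k (cast (congrArg T (hα k)).symm (φ (α (k + 1)) y)))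
        ≤ c ^ (k + 1) * dist (φ (α (k + 1)) x) (φ (α (k + 1)) y) := h1
      _ ≤ c ^ (k + 1) * (c * dist x y) := by
          exact mul_le_mul_of_nonneg_left h2 hpow
      _ = c ^ (k + 1 + 1) * dist x y := by ring

private lemma pathMap_mem {V E : Type*} (T : V → Type*) [∀ v, MetricSpace (T v)]
    (r s : E → V) (φ : (e : E) → T (r e) → T (s e)) (K : (v : V) → Set (T v))
    (hstep : ∀ (e : E) (z : T (r e)), z ∈ K (r e) → φ e z ∈ K (s e))
    (α : ℕ → E) (hα : ∀ i, r (α i) = s (α (i + 1))) :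
    ∀ k (x : T (r (α k))), x ∈ K (r (α k)) →
      pathMap T r s φ α hα k x ∈ K (s (α 0)) := by
  intro k
  induction k with
  | zero => intro x hx; exact hstep (α 0) x hx
  | succ k ih =>
    intro x hx
    simp only [pathMap]
    exact ih _ (castMem (hα k).symm _ (hstep (α (k + 1)) x hx))

/-- The image of the coding map `Π : E^∞ → T` of a Mauldin–Williams graph equals the
invariant set: for each vertex `v`, the set of points `Π(α)` over infinite paths `α`
starting at `v` (i.e. the unique points of `⋂ k, φ_{α 0 ⋯ α k} '' T (r (α k))`)
equals the member `K v` of the unique invariant list. -/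
theorem stmt_8 {V E : Type*} [Fintype V] [Fintype E] (r s : E → V)
    (hnosink : ∀ v : V, ∃ e : E, s e = v)
    (hnosource : ∀ v : V, ∃ e : E, r e = v)
    (T : V → Type*) [∀ v, MetricSpace (T v)] [∀ v, CompactSpace (T v)]
    [∀ v, Nonempty (T v)]
    (φ : (e : E) → T (r e) → T (s e)) (c : ℝ) (hc0 : 0 < c) (hc1 : c < 1)
    (hφ : ∀ (e : E) (x y : T (r e)), dist (φ e x) (φ e y) ≤ c * dist x y)
    (K : (v : V) → Set (T v))
    (hKc : ∀ v, IsCompact (K v)) (hKn : ∀ v, (K v).Nonempty)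
    (hKinv : ∀ v, K v = ⋃ (e : E), ⋃ (he : s e = v),
      (fun x => cast (congrArg T he) (φ e x)) '' K (r e)) :
    ∀ v : V, K v = {x : T v |
      ∃ (α : ℕ → E) (hα : ∀ i, r (α i) = s (α (i + 1))) (h0 : s (α 0) = v),
        ∀ k, cast (congrArg T h0).symm x ∈
          pathMap T r s φ α hα k '' (Set.univ : Set (T (r (α k))))} := by
  have hstep : ∀ (e : E) (z : T (r e)), z ∈ K (r e) → φ e z ∈ K (s e) := by
    intro e z hz
    rw [hKinv (s e)]
    refine Set.mem_iUnion.2 ⟨e, Set.mem_iUnion.2 ⟨rfl, ⟨z, hz, ?_⟩⟩⟩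
    rfl
  have step : ∀ (w : V) (y : T w), y ∈ K w →
      ∃ (e : E) (he : s e = w) (z : T (r e)),
        z ∈ K (r e) ∧ cast (congrArg T he) (φ e z) = y := by
    intro w y hy
    rw [hKinv w] at hy
    simp only [Set.mem_iUnion, Set.mem_image] at hy
    obtain ⟨e, he, z, hz, hzy⟩ := hy
    exact ⟨e, he, z, hz, hzy⟩
  choose ed hed zd hzd hcast using step
  intro v
  ext x
  simp only [Set.mem_setOf_eq]
  constructor
  · -- K v ⊆ image of coding map
    intro hx
    let P := Σ' (w : V), Σ' (y : T w), y ∈ K w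
    let next : P → P := fun p => ⟨r (ed p.1 p.2.1 p.2.2), zd p.1 p.2.1 p.2.2,
      hzd p.1 p.2.1 p.2.2⟩
    let seq : ℕ → P := itr next ⟨v, x, hx⟩
    let α : ℕ → E := fun n => ed (seq n).1 (seq n).2.1 (seq n).2.2
    have hs : ∀ n, s (α n) = (seq n).1 := fun n => hed _ _ _
    have hα : ∀ i, r (α i) = s (α (i + 1)) := fun i => (hs (i + 1)).symm
    have h0 : s (α 0) = v := hs 0
    let y : ∀ k, T (r (α k)) := fun k => (seq (k + 1)).2.1
    have key : ∀ k, pathMap T r s φ α hα k (y k) = cast (congrArg T h0).symm x := by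
      intro k
      induction k with
      | zero =>
        have h1 : cast (congrArg T h0) (φ (α 0) (y 0)) = x := hcast v x hx
        exact castShift _ _ _ h1
      | succ k ih =>
        simp only [pathMap]
        have h1 : (cast (congrArg T (hα k)).symm (φ (α (k + 1)) (y (k + 1))) : T (r (α k)))
            = y k := hcast (seq (k + 1)).1 (seq (k + 1)).2.1 (seq (k + 1)).2.2
        exact (congrArg (pathMap T r s φ α hα k) h1).trans ih
    exact ⟨α, hα, h0, fun k => ⟨y k, Set.mem_univ _, key k⟩⟩
  · -- image of coding map ⊆ K v
    rintro ⟨α, hα, h0, hmem⟩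
    set x' := cast (congrArg T h0).symm x with hx'
    have hne : (Finset.univ : Finset V).Nonempty := ⟨v, Finset.mem_univ v⟩
    set D := Finset.univ.sup' hne (fun w => Metric.diam (Set.univ : Set (T w))) with hD
    have hD0 : 0 ≤ D := by
      rw [hD]
      exact le_trans Metric.diam_nonneg
        (Finset.le_sup' (fun w => Metric.diam (Set.univ : Set (T w))) (Finset.mem_univ v))
    have hx'K : x' ∈ K (s (α 0)) := by
      rw [← (hKc (s (α 0))).isClosed.closure_eq, Metric.mem_closure_iff]
      intro ε hε
      obtain ⟨k, hk⟩ := exists_pow_lt_of_lt_one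
        (div_pos hε (by linarith : (0:ℝ) < D + 1)) hc1
      obtain ⟨u, -, hu⟩ := hmem k
      obtain ⟨w, hw⟩ := hKn (r (α k))
      refine ⟨pathMap T r s φ α hα k w,
        pathMap_mem T r s φ K hstep α hα k w hw, ?_⟩
      have hlip := pathMap_lip T r s φ c hc0.le hφ α hα k u w
      have hdb : dist u w ≤ D := by
        rw [hD]
        refine le_trans (Metric.dist_le_diam_of_mem
          (isCompact_univ.isBounded) (Set.mem_univ u) (Set.mem_univ w)) ?_
        exact Finset.le_sup' (fun w => Metric.diam (Set.univ : Set (T w)))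
          (Finset.mem_univ (r (α k)))
      have hpow : (0:ℝ) ≤ c ^ (k + 1) := pow_nonneg hc0.le _
      have hpow2 : c ^ (k + 1) ≤ c ^ k := by
        calc c ^ (k + 1) = c ^ k * c := by ring
          _ ≤ c ^ k * 1 := by
              exact mul_le_mul_of_nonneg_left hc1.le (pow_nonneg hc0.le _)
          _ = c ^ k := mul_one _
      have hk' : c ^ k * (D + 1) < ε := by
        rw [lt_div_iff₀ (by linarith : (0:ℝ) < D + 1)] at hk
        exact hk
      have hpk : (0:ℝ) < c ^ k := pow_pos hc0 _
      calc dist x' (pathMap T r s φ α hα k w)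
          = dist (pathMap T r s φ α hα k u) (pathMap T r s φ α hα k w) := by rw [hu]
        _ ≤ c ^ (k + 1) * dist u w := hlip
        _ < ε := by nlinarith [dist_nonneg (x := u) (y := w)]
    have hxe : x = cast ((congrArg T h0).symm).symm x' := castShift _ _ _ rfl
    rw [hxe]
    exact castMem h0 _ hx'K
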